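/- arXiv:1908.10185 — 2 statements merged into one kernel-verified Lean document; each statement's English description precedes it below -/
import Mathlib

section
/- Let I be a good ideal in K[x_1,…,x_n] and let a_1,…,a_n be nonnegative integers, with l = a_1+⋯+a_n+1. Then I_{a_1,…,a_n} = I^l : ⟨μ_1^{a_1}⋯μ_n^{a_n}⟩ (the ideal quotient of I^l by the principal ideal generated by μ_1^{a_1}⋯μ_n^{a_n}). -/
open MvPolynomial

namespace GasanovaRR

/-- The monomial `x^α` in `K[x_1,…,x_n]`. -/
noncomputable def mono (K : Type*) [Field K] {n : ℕ} (α : Fin n → ℕ) :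
    MvPolynomial (Fin n) K :=
  MvPolynomial.monomial (Finsupp.equivFunOnFinite.symm α) 1

/-- `I` is a monomial ideal: it is generated by a set of monomials. -/
def IsMonomialIdeal {K : Type*} [Field K] {n : ℕ}
    (I : Ideal (MvPolynomial (Fin n) K)) : Prop :=
  ∃ A : Set (Fin n → ℕ), I = Ideal.span (mono K '' A)

/-- `x^α` is a minimal monomial generator of `I`, i.e. `x^α ∈ G(I)`:
`x^α ∈ I` and no monomial in `I` strictly divides it. -/
def IsMinGen {K : Type*} [Field K] {n : ℕ}
    (I : Ideal (MvPolynomial (Fin n) K)) (α : Fin n → ℕ) : Prop :=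
  mono K α ∈ I ∧ ∀ β : Fin n → ℕ, mono K β ∈ I → β ≤ α → β = α

/-- The point `α` lies in the box `B_{a_1,…,a_n}` (for box sizes `d_1,…,d_n`). -/
def InBox {n : ℕ} (d a α : Fin n → ℕ) : Prop :=
  ∀ i, a i * d i ≤ α i ∧ α i ≤ (a i + 1) * d i

/-- `I` is a good ideal (w.r.t. box sizes `d`): for every `l ≥ 1`, every minimal
generator of `I^l` lies in a box whose coordinate sum is `l - 1`. -/
def IsGood {K : Type*} [Field K] {n : ℕ}
    (I : Ideal (MvPolynomial (Fin n) K)) (d : Fin n → ℕ) : Prop :=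
  ∀ l : ℕ, 1 ≤ l → ∀ α : Fin n → ℕ, IsMinGen (I ^ l) α →
    ∃ a : Fin n → ℕ, InBox d a α ∧ ∑ i, a i = l - 1

/-- `I` is an `𝔪`-primary monomial ideal whose minimal generating set contains
`μ_i = x_i^{d_i}` with `d_i > 0` for each `i`. -/
def MPrimaryWithCorners {K : Type*} [Field K] {n : ℕ}
    (I : Ideal (MvPolynomial (Fin n) K)) (d : Fin n → ℕ) : Prop :=
  IsMonomialIdeal I ∧ I ≠ ⊤ ∧ (∀ i, 0 < d i) ∧ ∀ i, IsMinGen I (Pi.single i (d i))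

/-- The ideal `I_{a_1,…,a_n}` associated to the box `B_{a_1,…,a_n}`, generated by
`m / (μ_1^{a_1}⋯μ_n^{a_n})` for `m ∈ B_{a_1,…,a_n} ∩ G(I^l)`, `l = a_1+⋯+a_n+1`. -/
noncomputable def boxIdeal {K : Type*} [Field K] {n : ℕ}
    (I : Ideal (MvPolynomial (Fin n) K)) (d a : Fin n → ℕ) :
    Ideal (MvPolynomial (Fin n) K) :=
  Ideal.span ((fun α => mono K (α - fun i => a i * d i)) ''
    {α | InBox d a α ∧ IsMinGen (I ^ (∑ i, a i + 1)) α})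

/-- The Ratliff–Rush closure `Ĩ = ⋃_{k ≥ 0} (I^{k+1} : I^k)`. -/
noncomputable def ratliffRush {K : Type*} [Field K] {n : ℕ}
    (I : Ideal (MvPolynomial (Fin n) K)) : Ideal (MvPolynomial (Fin n) K) :=
  ⨆ k : ℕ, (I ^ (k + 1)).colon ((I ^ k : Ideal (MvPolynomial (Fin n) K)) : Set (MvPolynomial (Fin n) K))

/-- The cone in `ℕ^n` with set `S` of fixed coordinates and vertex `v`. -/
def Cone {n : ℕ} (S : Set (Fin n)) (v : Fin n → ℕ) : Set (Fin n → ℕ) :=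
  {b | (∀ i ∈ S, b i = v i) ∧ ∀ i ∉ S, v i ≤ b i}

/-- `I` is a very good ideal: it is good and `I_{a_1,…,a_n} = I` for all boxes. -/
def IsVeryGood {K : Type*} [Field K] {n : ℕ}
    (I : Ideal (MvPolynomial (Fin n) K)) (d : Fin n → ℕ) : Prop :=
  IsGood I d ∧ ∀ a : Fin n → ℕ, boxIdeal I d a = I

/-! ### Auxiliary combinatorial layer -/

section AuxComb

variable {n : ℕ}

/-- `l`-fold sumsets of `A`. -/
def sums (A : Set (Fin n → ℕ)) : ℕ → Set (Fin n → ℕ)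
  | 0 => {0}
  | l + 1 => {x | ∃ g ∈ A, ∃ y ∈ sums A l, x = g + y}

/-- Combinatorial membership of the monomial `x^β` in `I^l` where `I = span (mono '' A)`. -/
def CMem (A : Set (Fin n → ℕ)) (l : ℕ) (β : Fin n → ℕ) : Prop :=
  ∃ γ ∈ sums A l, ∀ i, γ i ≤ β i

/-- Combinatorial minimal generator of `I^l`. -/
def CMemGen (A : Set (Fin n → ℕ)) (l : ℕ) (α : Fin n → ℕ) : Prop :=
  CMem A l α ∧ ∀ β, CMem A l β → (∀ i, β i ≤ α i) → β = α

theorem cmem_mono {A : Set (Fin n → ℕ)} {l : ℕ} {β β' : Fin n → ℕ}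
    (h : CMem A l β) (hle : ∀ i, β i ≤ β' i) : CMem A l β' := by
  obtain ⟨γ, hγ, hg⟩ := h
  exact ⟨γ, hγ, fun i => (hg i).trans (hle i)⟩

theorem sums_add {A : Set (Fin n → ℕ)} {l k : ℕ} {x y : Fin n → ℕ}
    (hx : x ∈ sums A l) (hy : y ∈ sums A k) : x + y ∈ sums A (l + k) := by
  induction l generalizing x with
  | zero =>
      obtain rfl : x = (0 : Fin n → ℕ) := hx
      simpa using hy
  | succ l ih =>
      obtain ⟨g, hg, z, hz, rfl⟩ := hx
      have h2 : z + y ∈ sums A (l + k) := ih hz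
      have : Nat.succ l + k = (l + k) + 1 := by omega
      rw [this]
      exact ⟨g, hg, z + y, h2, by rw [add_assoc]⟩

theorem cmem_zero {A : Set (Fin n → ℕ)} : CMem A 0 0 :=
  ⟨0, rfl, fun _ => le_rfl⟩

theorem cmem_add {A : Set (Fin n → ℕ)} {l k : ℕ} {β γ : Fin n → ℕ}
    (h1 : CMem A l β) (h2 : CMem A k γ) : CMem A (l + k) (β + γ) := by
  obtain ⟨x, hx, hxle⟩ := h1
  obtain ⟨y, hy, hyle⟩ := h2
  refine ⟨x + y, sums_add hx hy, fun i => ?_⟩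
  simp only [Pi.add_apply]
  exact add_le_add (hxle i) (hyle i)

theorem cmem_sum {A : Set (Fin n → ℕ)} {ι : Type*} (s : Finset ι)
    (lvl : ι → ℕ) (f : ι → (Fin n → ℕ)) (h : ∀ i ∈ s, CMem A (lvl i) (f i)) :
    CMem A (∑ i ∈ s, lvl i) (∑ i ∈ s, f i) := by
  classical
  induction s using Finset.induction with
  | empty => simpa using (cmem_zero (A := A))
  | insert x s' hx ih =>
      rw [Finset.sum_insert hx, Finset.sum_insert hx]
      exact cmem_add (h x (Finset.mem_insert_self _ _))
        (ih fun i hi => h i (Finset.mem_insert_of_mem hi))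

theorem cmem_nsmul {A : Set (Fin n → ℕ)} {l : ℕ} {β : Fin n → ℕ}
    (h : CMem A l β) (N : ℕ) : CMem A (N * l) (fun i => N * β i) := by
  induction N with
  | zero => simpa [Pi.zero_def] using (cmem_zero (A := A))
  | succ N ih =>
      have h2 : CMem A (N * l + l) ((fun i => N * β i) + β) := cmem_add ih h
      have e1 : (N + 1) * l = N * l + l := by ring
      have e2 : (fun i => (N + 1) * β i) = (fun i => N * β i) + β := by
        funext i; simp [Pi.add_apply]; ring
      rw [e1, e2]; exact h2

theorem cmem_single {A : Set (Fin n → ℕ)} {d : Fin n → ℕ}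
    (hc : ∀ i, CMem A 1 (Pi.single i (d i))) (i : Fin n) (k : ℕ) :
    CMem A k (Pi.single i (k * d i)) := by
  induction k with
  | zero => simpa using (cmem_zero (A := A))
  | succ k ih =>
      have h2 := cmem_add ih (hc i)
      have e : (Pi.single i (k * d i) : Fin n → ℕ) + Pi.single i (d i)
          = Pi.single i ((k + 1) * d i) := by
        funext j
        by_cases hji : j = i
        · subst hji; simp only [Pi.add_apply, Pi.single_eq_same]; ring
        · simp [Pi.single_apply, hji]
      rwa [e] at h2

theorem cmem_dmul {A : Set (Fin n → ℕ)} {d : Fin n → ℕ}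
    (hc : ∀ i, CMem A 1 (Pi.single i (d i))) (c : Fin n → ℕ) :
    CMem A (∑ i, c i) (fun i => c i * d i) := by
  have e : (fun i => c i * d i) = ∑ i, Pi.single i (c i * d i) := by
    rw [Finset.univ_sum_single (fun i => c i * d i)]
  rw [e]
  exact cmem_sum Finset.univ c _ (fun i _ => cmem_single hc i (c i))

/-- Existence of a minimal element of a set of exponent vectors below a given one. -/
theorem exists_min_below (X : Set (Fin n → ℕ)) {v : Fin n → ℕ} (hv : v ∈ X) :
    ∃ w, w ∈ X ∧ (∀ i, w i ≤ v i) ∧ ∀ v', v' ∈ X → (∀ i, v' i ≤ w i) → v' = w := by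
  classical
  suffices H : ∀ k (v : Fin n → ℕ), ∑ i, v i ≤ k → v ∈ X →
      ∃ w, w ∈ X ∧ (∀ i, w i ≤ v i) ∧ ∀ v', v' ∈ X → (∀ i, v' i ≤ w i) → v' = w from
    H (∑ i, v i) v le_rfl hv
  intro k
  induction k with
  | zero =>
      intro v hsum hvX
      refine ⟨v, hvX, fun i => le_rfl, fun v' hv' hle => funext fun i => ?_⟩
      have h0 : v i ≤ ∑ j, v j := Finset.single_le_sum (fun j _ => Nat.zero_le (v j))
        (Finset.mem_univ i)
      have h1 := hle i
      omega
  | succ k ih =>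
      intro v hsum hvX
      by_cases hmin : ∀ v', v' ∈ X → (∀ i, v' i ≤ v i) → v' = v
      · exact ⟨v, hvX, fun i => le_rfl, hmin⟩
      · push_neg at hmin
        obtain ⟨v', hv'X, hle', hne⟩ := hmin
        have hlt : ∑ i, v' i < ∑ i, v i := by
          obtain ⟨i0, hi0⟩ := Function.ne_iff.mp hne
          exact Finset.sum_lt_sum (fun i _ => hle' i)
            ⟨i0, Finset.mem_univ _, lt_of_le_of_ne (hle' i0) hi0⟩
        obtain ⟨w, hwX, hwle, hwmin⟩ := ih v' (by omega) hv'X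
        exact ⟨w, hwX, fun i => (hwle i).trans (hle' i), hwmin⟩

theorem exists_cmemGen_le {A : Set (Fin n → ℕ)} {l : ℕ} {β : Fin n → ℕ}
    (h : CMem A l β) : ∃ α, CMemGen A l α ∧ ∀ i, α i ≤ β i := by
  obtain ⟨w, hwX, hwle, hwmin⟩ := exists_min_below {β | CMem A l β} h
  exact ⟨w, ⟨hwX, fun β' h1 h2 => hwmin β' h1 h2⟩, hwle⟩

/-- The key valuation estimate `(B+)`: for a good configuration, every `β` with
`CMem A l β` satisfies `D·l ≤ ∑ (D/dᵢ)·βᵢ` where `D = ∏ dᵢ`. -/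
theorem cmem_valuation {A : Set (Fin n → ℕ)} {d : Fin n → ℕ} (hd : ∀ i, 0 < d i)
    (hgoodc : ∀ l, 1 ≤ l → ∀ α, CMemGen A l α →
      ∃ c : Fin n → ℕ, (∑ i, c i) = l - 1 ∧ ∀ i, c i * d i ≤ α i)
    {l : ℕ} {β : Fin n → ℕ} (hl : 1 ≤ l) (h : CMem A l β) :
    (∏ i, d i) * l ≤ ∑ i, ((∏ i, d i) / d i) * β i := by
  set D := ∏ i, d i with hD
  have hD1 : 0 < D := Finset.prod_pos (fun i _ => hd i)
  have h2 : CMem A ((2 * D) * l) (fun i => (2 * D) * β i) := cmem_nsmul h (2 * D)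
  have hl2 : 1 ≤ (2 * D) * l := by
    have : 1 * 1 ≤ (2 * D) * l := Nat.mul_le_mul (by omega) hl
    omega
  obtain ⟨α, hαGen, hαle⟩ := exists_cmemGen_le h2
  obtain ⟨c, hcsum, hcle⟩ := hgoodc _ hl2 α hαGen
  have key : ∀ i, c i ≤ 2 * ((D / d i) * β i) := by
    intro i
    have hdvd : d i ∣ D := Finset.dvd_prod_of_mem _ (Finset.mem_univ i)
    have h1 : c i * d i ≤ (2 * ((D / d i) * β i)) * d i := by
      have e : (2 * ((D / d i) * β i)) * d i = 2 * ((D / d i) * d i) * β i := by ring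
      rw [e, Nat.div_mul_cancel hdvd]
      calc c i * d i ≤ α i := hcle i
        _ ≤ (2 * D) * β i := hαle i
        _ = 2 * D * β i := rfl
    exact Nat.le_of_mul_le_mul_right h1 (hd i)
  have hsum : ∑ i, c i ≤ 2 * ∑ i, (D / d i) * β i := by
    rw [Finset.mul_sum]
    exact Finset.sum_le_sum (fun i _ => key i)
  rw [hcsum] at hsum
  have e2 : (2 * D) * l = 2 * (D * l) := by ring
  rw [e2] at hsum
  omega

/-- The core combinatorial lemma: a minimal element of `I^l ∩ [a·d, m]` is a minimal
generator of `I^l` lying in the box `B_a`. -/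
theorem core_lemma {A : Set (Fin n → ℕ)} {d : Fin n → ℕ} (hd : ∀ i, 0 < d i)
    (hc : ∀ i, CMem A 1 (Pi.single i (d i)))
    (hgoodc : ∀ l, 1 ≤ l → ∀ α, CMemGen A l α →
      ∃ c : Fin n → ℕ, (∑ i, c i) = l - 1 ∧ ∀ i, c i * d i ≤ α i ∧ α i ≤ (c i + 1) * d i)
    (a m : Fin n → ℕ) (hm : CMem A (∑ i, a i + 1) m) (hge : ∀ i, a i * d i ≤ m i) :
    ∃ w, CMemGen A (∑ i, a i + 1) w ∧ (∀ i, a i * d i ≤ w i ∧ w i ≤ (a i + 1) * d i) ∧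
      ∀ i, w i ≤ m i := by
  classical
  set l := ∑ i, a i + 1 with hl
  have hl1 : 1 ≤ l := by omega
  obtain ⟨w, ⟨hwMem, hwge, hwle⟩, -, hwmin⟩ :=
    exists_min_below {v | CMem A l v ∧ (∀ i, a i * d i ≤ v i) ∧ (∀ i, v i ≤ m i)}
      (v := m) ⟨hm, hge, fun i => le_rfl⟩
  -- the corner element S j = (a + e_j)·d
  have hSmem : ∀ j : Fin n, CMem A l (fun i => (a i + if i = j then 1 else 0) * d i) := by
    intro j
    have h1 := cmem_dmul hc (fun i => a i + if i = j then 1 else 0)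
    have hsum : (∑ i, (a i + if i = j then 1 else 0)) = l := by
      rw [Finset.sum_add_distrib, Finset.sum_ite_eq' Finset.univ j (fun _ => 1)]
      simp [hl]
    rwa [hsum] at h1
  have hSX : ∀ j : Fin n, (∀ i, (a i + if i = j then 1 else 0) * d i ≤ w i) →
      (fun i => (a i + if i = j then 1 else 0) * d i) = w := by
    intro j hle
    refine hwmin _ ⟨hSmem j, fun i => ?_, fun i => (hle i).trans (hwle i)⟩ hle
    exact Nat.mul_le_mul_right _ (Nat.le_add_right _ _)
  -- upper bound for w
  have hwub : ∀ j, w j ≤ (a j + 1) * d j := by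
    intro j
    by_contra hcon
    push_neg at hcon
    have hle : ∀ i, (a i + if i = j then 1 else 0) * d i ≤ w i := by
      intro i
      by_cases hij : i = j
      · subst hij
        have e : (a i + if i = i then 1 else 0) * d i = (a i + 1) * d i := by simp
        omega
      · have e : (a i + if i = j then 1 else 0) * d i = a i * d i := by simp [hij]
        have := hwge i
        omega
    have hEq := hSX j hle
    have h2 : (a j + if j = j then 1 else 0) * d j = w j := congrFun hEq j
    have e : (a j + if j = j then 1 else 0) * d j = (a j + 1) * d j := by simp
    omega
  -- minimal generator below w
  obtain ⟨u, huGen, hule⟩ := exists_cmemGen_le hwMem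
  by_cases hcase : ∀ i, a i * d i ≤ u i
  · have hu : u = w := hwmin u ⟨huGen.1, hcase, fun i => (hule i).trans (hwle i)⟩ hule
    exact ⟨w, hu ▸ huGen, fun i => ⟨hwge i, hwub i⟩, hwle⟩
  · exfalso
    push_neg at hcase
    obtain ⟨i0, hi0⟩ := hcase
    -- box for u
    obtain ⟨c, hcsum, hcb⟩ := hgoodc l hl1 u huGen
    have hci0 : c i0 < a i0 := by
      by_contra hcon
      push_neg at hcon
      have h1 : a i0 * d i0 ≤ c i0 * d i0 := Nat.mul_le_mul_right _ hcon
      have h2 := (hcb i0).1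
      omega
    have hcub : ∀ i, c i ≤ a i + 1 := by
      intro i
      have h1 : c i * d i ≤ (a i + 1) * d i := ((hcb i).1.trans ((hule i).trans (hwub i)))
      exact Nat.le_of_mul_le_mul_right h1 (hd i)
    have hj : ∃ j, a j < c j := by
      by_contra hcon
      push_neg at hcon
      have h1 : ∑ i, c i < ∑ i, a i :=
        Finset.sum_lt_sum (fun i _ => hcon i) ⟨i0, Finset.mem_univ _, hci0⟩
      omega
    obtain ⟨j1, hj1⟩ := hj
    have hcj1 : c j1 = a j1 + 1 := le_antisymm (hcub j1) hj1
    have huj1 : u j1 = (a j1 + 1) * d j1 := by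
      have h1 := (hcb j1).1
      have h2 := (hule j1).trans (hwub j1)
      rw [hcj1] at h1
      omega
    have hwj1 : w j1 = (a j1 + 1) * d j1 := by
      have := hule j1
      have := hwub j1
      omega
    have hne : i0 ≠ j1 := by
      intro h
      rw [h] at hi0
      have : a j1 * d j1 ≤ (a j1 + 1) * d j1 := Nat.mul_le_mul_right _ (by omega)
      omega
    -- S j1 = w pins down w
    have hSw := hSX j1 (by
      intro i
      by_cases hij : i = j1
      · subst hij
        have e : (a i + if i = i then 1 else 0) * d i = (a i + 1) * d i := by simp
        omega
      · have e : (a i + if i = j1 then 1 else 0) * d i = a i * d i := by simp [hij]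
        have := hwge i
        omega)
    have hwad : ∀ i, i ≠ j1 → w i = a i * d i := by
      intro i hij
      have h2 : (a i + if i = j1 then 1 else 0) * d i = w i := congrFun hSw i
      have e : (a i + if i = j1 then 1 else 0) * d i = a i * d i := by simp [hij]
      omega
    -- valuation bound
    set D := ∏ i, d i with hD
    have hD1 : 0 < D := Finset.prod_pos (fun i _ => hd i)
    have hBp : D * l ≤ ∑ i, (D / d i) * u i :=
      cmem_valuation hd
        (fun l' hl' α hα => (hgoodc l' hl' α hα).imp
          (fun c' hc' => ⟨hc'.1, fun i => (hc'.2 i).1⟩))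
        hl1 huGen.1
    have hdiv : 1 ≤ D / d i0 := by
      rw [Nat.one_le_div_iff (hd i0)]
      exact Finset.single_le_prod' (fun i _ => Nat.one_le_iff_ne_zero.mpr
        (Nat.pos_iff_ne_zero.mp (hd i))) (Finset.mem_univ i0)
    have hpt : ∀ i, (D / d i) * u i + (if i = i0 then D / d i0 else 0) ≤
        D * a i + (if i = j1 then D else 0) := by
      intro i
      have hdvd : d i ∣ D := Finset.dvd_prod_of_mem _ (Finset.mem_univ i)
      have hcancel : (D / d i) * d i = D := Nat.div_mul_cancel hdvd
      by_cases hii0 : i = i0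
      · subst hii0
        rw [if_pos rfl, if_neg hne]
        have h1 : u i + 1 ≤ a i * d i := hi0
        calc (D / d i) * u i + D / d i = (D / d i) * (u i + 1) := by ring
          _ ≤ (D / d i) * (a i * d i) := Nat.mul_le_mul_left _ h1
          _ = ((D / d i) * d i) * a i := by ring
          _ = D * a i := by rw [hcancel]
          _ = D * a i + 0 := by omega
      · rw [if_neg hii0]
        by_cases hij1 : i = j1
        · subst hij1
          rw [if_pos rfl]
          have : (D / d i) * u i = D * a i + D := by
            rw [huj1]
            calc (D / d i) * ((a i + 1) * d i) = ((D / d i) * d i) * (a i + 1) := by ring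
              _ = D * (a i + 1) := by rw [hcancel]
              _ = D * a i + D := by ring
          omega
        · rw [if_neg hij1]
          have h1 : u i ≤ a i * d i := by
            have := hule i
            have := hwad i hij1
            omega
          calc (D / d i) * u i + 0 = (D / d i) * u i := by omega
            _ ≤ (D / d i) * (a i * d i) := Nat.mul_le_mul_left _ h1
            _ = ((D / d i) * d i) * a i := by ring
            _ = D * a i := by rw [hcancel]
    have hsum2 : (∑ i, (D / d i) * u i) + D / d i0 ≤ D * (∑ i, a i) + D := by
      have h1 := Finset.sum_le_sum (fun i (_ : i ∈ Finset.univ) => hpt i)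
      rw [Finset.sum_add_distrib, Finset.sum_add_distrib,
        Finset.sum_ite_eq' Finset.univ i0 (fun _ => D / d i0),
        Finset.sum_ite_eq' Finset.univ j1 (fun _ => D), ← Finset.mul_sum] at h1
      simpa using h1
    have hDl : D * l = D * (∑ i, a i) + D := by rw [hl]; ring
    omega

end AuxComb

section AuxBridge

variable {K : Type*} [Field K] {n : ℕ}

theorem mono_mul (β γ : Fin n → ℕ) : mono K β * mono K γ = mono K (β + γ) := by
  unfold mono
  rw [monomial_mul, one_mul]
  have e : Finsupp.equivFunOnFinite.symm β + Finsupp.equivFunOnFinite.symm γ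
      = Finsupp.equivFunOnFinite.symm (β + γ) := by
    ext i
    simp
  rw [e]

theorem mem_span_mono_iff (S : Set (Fin n → ℕ)) (f : MvPolynomial (Fin n) K) :
    f ∈ Ideal.span (mono K '' S) ↔ ∀ xi ∈ f.support, ∃ γ ∈ S, ∀ i, γ i ≤ xi i := by
  have himg : mono K '' S =
      (fun s => monomial s (1 : K)) '' (Finsupp.equivFunOnFinite.symm '' S) := by
    rw [Set.image_image]
    rfl
  rw [himg, mem_ideal_span_monomial_image]
  refine forall₂_congr fun xi _ => ⟨?_, ?_⟩
  · rintro ⟨si, ⟨γ, hγ, rfl⟩, hle⟩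
    exact ⟨γ, hγ, fun i => by simpa using hle i⟩
  · rintro ⟨γ, hγ, hle⟩
    refine ⟨_, ⟨γ, hγ, rfl⟩, ?_⟩
    intro i
    simpa using hle i

theorem mono_zero_eq_one : (mono K (0 : Fin n → ℕ)) = 1 := by
  unfold mono
  have h0 : Finsupp.equivFunOnFinite.symm (0 : Fin n → ℕ) = 0 := by
    ext i
    simp
  rw [h0, monomial_zero', C_1]

theorem span_mono_pow (A : Set (Fin n → ℕ)) (l : ℕ) :
    (Ideal.span (mono K '' A)) ^ l = Ideal.span (mono K '' sums A l) := by
  induction l with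
  | zero =>
      rw [pow_zero]
      have he : mono K '' sums A 0 = {1} := by
        have : sums A 0 = ({0} : Set (Fin n → ℕ)) := rfl
        rw [this, Set.image_singleton, mono_zero_eq_one]
      rw [he, Ideal.span_singleton_one, Ideal.one_eq_top]
  | succ l ih =>
      rw [pow_succ, ih, Ideal.span_mul_span']
      congr 1
      ext f
      constructor
      · rintro ⟨p, ⟨y, hy, rfl⟩, q, ⟨g, hg, rfl⟩, rfl⟩
        have hmul : mono K y * mono K g = mono K (g + y) := by
          rw [mono_mul, add_comm y g]
        exact ⟨g + y, ⟨g, hg, y, hy, rfl⟩, hmul.symm⟩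
      · rintro ⟨x, ⟨g, hg, y, hy, rfl⟩, rfl⟩
        have hmul : mono K y * mono K g = mono K (g + y) := by
          rw [mono_mul, add_comm y g]
        exact Set.mem_mul.mpr ⟨mono K y, ⟨y, hy, rfl⟩, mono K g, ⟨g, hg, rfl⟩, hmul⟩

theorem mono_mem_pow_iff (A : Set (Fin n → ℕ)) (l : ℕ) (β : Fin n → ℕ) :
    mono K β ∈ (Ideal.span (mono K '' A)) ^ l ↔ CMem A l β := by
  classical
  rw [span_mono_pow, mem_span_mono_iff]
  have hsupp : (mono K β).support = {Finsupp.equivFunOnFinite.symm β} := by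
    unfold mono
    rw [support_monomial]
    simp
  rw [hsupp]
  simp only [Finset.mem_singleton, forall_eq]
  unfold CMem
  refine exists_congr fun γ => and_congr_right fun _ => ?_
  refine forall_congr' fun i => ?_
  simp

theorem isMinGen_iff_cmemGen (A : Set (Fin n → ℕ)) (l : ℕ) (α : Fin n → ℕ) :
    IsMinGen ((Ideal.span (mono K '' A)) ^ l) α ↔ CMemGen A l α := by
  unfold IsMinGen CMemGen
  simp only [mono_mem_pow_iff]
  refine and_congr_right fun _ => ?_
  refine forall_congr' fun β => imp_congr_right fun _ => ?_
  constructor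
  · intro h hle
    exact h fun i => hle i
  · intro h hle
    exact h fun i => hle i

end AuxBridge


/-- Proposition 4.4: for a good ideal `I`,
`I_{a_1,…,a_n} = I^l : ⟨μ_1^{a_1}⋯μ_n^{a_n}⟩` where `l = a_1 + ⋯ + a_n + 1`. -/
theorem boxIdeal_eq_colon {K : Type*} [Field K] {n : ℕ}
    (I : Ideal (MvPolynomial (Fin n) K)) (d : Fin n → ℕ)
    (hI : MPrimaryWithCorners I d) (hgood : IsGood I d) (a : Fin n → ℕ) :
    boxIdeal I d a =
      (I ^ (∑ i, a i + 1)).colon (Ideal.span {mono K (fun i => a i * d i)}) := by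
  classical
  obtain ⟨⟨A, hAI⟩, -, hd, hcorner⟩ := hI
  subst hAI
  set J := Ideal.span (mono K '' A) with hJ
  -- combinatorial corner hypothesis
  have hc : ∀ i, CMem A 1 (Pi.single i (d i)) := by
    intro i
    have h1 : mono K (Pi.single i (d i)) ∈ J := (hcorner i).1
    have h2 : mono K (Pi.single i (d i)) ∈ J ^ 1 := by rwa [pow_one]
    rwa [mono_mem_pow_iff] at h2
  -- combinatorial goodness hypothesis
  have hgoodc : ∀ l, 1 ≤ l → ∀ α, CMemGen A l α →
      ∃ c : Fin n → ℕ, (∑ i, c i) = l - 1 ∧ ∀ i, c i * d i ≤ α i ∧ α i ≤ (c i + 1) * d i := by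
    intro l hl α hα
    obtain ⟨b, hbox, hbsum⟩ := hgood l hl α ((isMinGen_iff_cmemGen A l α).mpr hα)
    exact ⟨b, hbsum, hbox⟩
  apply le_antisymm
  · -- boxIdeal ⊆ colon
    rw [boxIdeal, Ideal.span_le]
    rintro z ⟨α, ⟨hbox, hgen⟩, rfl⟩
    rw [SetLike.mem_coe, Ideal.mem_colon_span_singleton, mono_mul]
    have heq : (α - fun i => a i * d i) + (fun i => a i * d i) = α := by
      funext i
      have := (hbox i).1
      simp only [Pi.add_apply, Pi.sub_apply]
      omega
    rw [heq]
    exact hgen.1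
  · -- colon ⊆ boxIdeal
    intro f hf
    rw [Ideal.mem_colon_span_singleton] at hf
    rw [span_mono_pow, mem_span_mono_iff] at hf
    rw [boxIdeal]
    have himg : ((fun α => mono K (α - fun i => a i * d i)) ''
        {α | InBox d a α ∧ IsMinGen (J ^ (∑ i, a i + 1)) α}) =
        mono K '' ((fun α => α - fun i => a i * d i) ''
          {α | InBox d a α ∧ IsMinGen (J ^ (∑ i, a i + 1)) α}) := by
      rw [Set.image_image]
    rw [himg, mem_span_mono_iff]
    intro xi hxi
    -- the shifted exponent is in the support of f * μ^a
    set s : Fin n →₀ ℕ := Finsupp.equivFunOnFinite.symm (fun i => a i * d i) with hs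
    have hkey : (xi + s) ∈ (f * mono K (fun i => a i * d i)).support := by
      rw [MvPolynomial.mem_support_iff]
      have : MvPolynomial.coeff (xi + s) (f * monomial s (1 : K)) =
          MvPolynomial.coeff xi f := by
        rw [coeff_mul_monomial, mul_one]
      rw [mono, ← hs, this]
      exact MvPolynomial.mem_support_iff.mp hxi
    obtain ⟨γ, hγ, hγle⟩ := hf _ hkey
    -- so CMem at level l for xi + a·d
    have hmem : CMem A (∑ i, a i + 1) (fun i => xi i + a i * d i) := by
      refine ⟨γ, hγ, fun i => ?_⟩
      have := hγle i
      simpa [hs, Finsupp.add_apply] using this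
    have hge : ∀ i, a i * d i ≤ xi i + a i * d i := fun i => by omega
    obtain ⟨w, hwGen, hwbox, hwle⟩ := core_lemma hd hc hgoodc a _ hmem hge
    refine ⟨w - fun i => a i * d i, ⟨w, ⟨fun i => hwbox i, (isMinGen_iff_cmemGen A _ w).mpr hwGen⟩, rfl⟩, ?_⟩
    intro i
    have h1 := hwle i
    simp only [Pi.sub_apply]
    omega

end GasanovaRR
end

section
/- Let I be a good ideal in K[x_1,…,x_n] and let Q be a nonnegative integer. Then there exists a number L(Q) such that for every l ≥ L(Q) the following holds: for every minimal generator m of I^l there exist an index i ∈ {1,…,n} and a minimal generator m' of I^{l−Q} such that m = m'·μ_i^Q. -/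
open MvPolynomial

namespace GasanovaRR

/-! ### Auxiliary lemmas -/

section Aux

variable {K : Type*} [Field K] {n : ℕ}

lemma mono_zero : mono K (0 : Fin n → ℕ) = 1 := by
  have : (Finsupp.equivFunOnFinite.symm (0 : Fin n → ℕ)) = 0 := by ext j; simp
  simp [mono, this]

lemma mono_add (u v : Fin n → ℕ) : mono K (u + v) = mono K u * mono K v := by
  have : (Finsupp.equivFunOnFinite.symm (u + v)) =
      Finsupp.equivFunOnFinite.symm u + Finsupp.equivFunOnFinite.symm v := by ext j; simp
  rw [mono, mono, mono, this, MvPolynomial.monomial_mul, one_mul]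

lemma mono_pow (u : Fin n → ℕ) (m : ℕ) : mono K u ^ m = mono K (m • u) := by
  induction m with
  | zero => simp [mono_zero]
  | succ m ih => rw [pow_succ, ih, ← mono_add, succ_nsmul]

lemma mono_mul_mem {I : Ideal (MvPolynomial (Fin n) K)} {u v : Fin n → ℕ} {s t : ℕ}
    (hu : mono K u ∈ I ^ s) (hv : mono K v ∈ I ^ t) : mono K (u + v) ∈ I ^ (s + t) := by
  rw [mono_add, pow_add]; exact Ideal.mul_mem_mul hu hv

lemma mono_cd_mem {I : Ideal (MvPolynomial (Fin n) K)} {d : Fin n → ℕ}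
    (hμ : ∀ k, mono K (Pi.single k (d k)) ∈ I) (c : Fin n → ℕ) :
    mono K (fun k => c k * d k) ∈ I ^ (∑ k, c k) := by
  have key : ∀ s : Finset (Fin n),
      mono K (∑ k ∈ s, c k • Pi.single k (d k)) ∈ I ^ (∑ k ∈ s, c k) := by
    intro s
    induction s using Finset.induction with
    | empty => simp [mono_zero]
    | insert _ _ hx ih =>
      rw [Finset.sum_insert hx, Finset.sum_insert hx, mono_add, pow_add]
      refine Ideal.mul_mem_mul ?_ ih
      rw [← mono_pow]
      exact Ideal.pow_mem_pow (hμ _) _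
  have : (fun k => c k * d k) = ∑ k, c k • Pi.single k (d k) := by
    funext j
    simp [Finset.sum_apply, Pi.single_apply]
  rw [this]; exact key Finset.univ

lemma natSubseq (h : ℕ → ℕ) :
    ∃ g : ℕ → ℕ, StrictMono g ∧ ∀ j k, j ≤ k → h (g j) ≤ h (g k) := by
  have hpwo : (Set.univ : Set ℕ).IsPWO := (Set.isWF_univ_iff.2 inferInstance).isPWO
  obtain ⟨g, hg⟩ := hpwo.exists_monotone_subseq (f := h) (fun _ => Set.mem_univ _)
  exact ⟨g, g.strictMono, hg⟩

lemma piSubseq : ∀ (m : ℕ) (f : ℕ → (Fin m → ℕ)), ∃ g : ℕ → ℕ, StrictMono g ∧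
    ∀ j k, j ≤ k → f (g j) ≤ f (g k) := by
  intro m
  induction m with
  | zero => exact fun f => ⟨id, strictMono_id, fun j k _ => le_of_eq (Subsingleton.elim _ _)⟩
  | succ m ih =>
    intro f
    obtain ⟨g₁, hg₁, hm₁⟩ := ih (fun t i => f t i.castSucc)
    obtain ⟨g₂, hg₂, hm₂⟩ := natSubseq (fun t => f (g₁ t) (Fin.last m))
    refine ⟨g₁ ∘ g₂, hg₁.comp hg₂, fun j k hjk => ?_⟩
    intro i
    induction i using Fin.lastCases with
    | last => exact hm₂ j k hjk
    | cast i => exact hm₁ (g₂ j) (g₂ k) (hg₂.monotone hjk) i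

/-- Dickson-type stabilization for upper sets in `ℕ^n`. -/
lemma upper_update {m : ℕ} (U : Set (Fin m → ℕ))
    (hU : ∀ a ∈ U, ∀ a', a ≤ a' → a' ∈ U) (i : Fin m) :
    ∃ N : ℕ, ∀ a ∈ U, Function.update a i N ∈ U := by
  by_contra hcon
  push_neg at hcon
  choose a haU hna using hcon
  obtain ⟨g, hg, hmono⟩ := piSubseq m a
  set A := a (g 0) with hA
  set M := A i with hM
  refine hna (g M) (hU A (haU _) _ ?_)
  intro j
  rcases eq_or_ne j i with rfl | hj
  · simp only [Function.update_self]
    exact hM ▸ (hg.le_apply)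
  · rw [Function.update_of_ne hj]
    exact hmono 0 M (Nat.zero_le _) j

end Aux

/-- Lemma 6.1: for a good ideal `I` and any `Q ≥ 0` there exists `L(Q)` such that
for all `l ≥ L(Q)` and every minimal generator `m` of `I^l` there is an index `i`
and a minimal generator `m'` of `I^{l-Q}` with `m = m' · μ_i^Q`. -/
theorem factor_out_corner_power {K : Type*} [Field K] {n : ℕ}
    (I : Ideal (MvPolynomial (Fin n) K)) (d : Fin n → ℕ)
    (hI : MPrimaryWithCorners I d) (hgood : IsGood I d) (Q : ℕ) :
    ∃ L : ℕ, ∀ l : ℕ, L ≤ l → ∀ α : Fin n → ℕ, IsMinGen (I ^ l) α →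
      ∃ i : Fin n, ∃ β : Fin n → ℕ, IsMinGen (I ^ (l - Q)) β ∧
        α = β + Q • Pi.single i (d i) := by
  obtain ⟨-, -, -, hcorner⟩ := hI
  have hμ : ∀ k, mono K (Pi.single k (d k)) ∈ I := fun k => (hcorner k).1
  -- the upper sets `U r`
  set U : (Fin n → ℕ) → Set (Fin n → ℕ) := fun r =>
    {a | ∃ b, b ≤ a ∧ IsMinGen (I ^ (∑ k, b k + 1)) (r + fun k => b k * d k)} with hUdef
  have hUpper : ∀ r, ∀ a ∈ U r, ∀ a', a ≤ a' → a' ∈ U r := by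
    rintro r a ⟨b, hb, hmg⟩ a' haa'
    exact ⟨b, hb.trans haa', hmg⟩
  have hNri : ∀ r : Fin n → ℕ, ∀ i : Fin n, ∃ N, ∀ a ∈ U r, Function.update a i N ∈ U r :=
    fun r i => upper_update (U r) (hUpper r) i
  choose Nf hNf using hNri
  -- a uniform bound over the finitely many residues `r ≤ d`
  have hfin : {r : Fin n → ℕ | r ≤ d}.Finite := by
    have hsub : {r : Fin n → ℕ | r ≤ d} ⊆ Set.pi Set.univ (fun i => Set.Iic (d i)) := by
      intro r hr i _
      exact hr i
    exact (Set.Finite.pi (fun i => Set.finite_Iic (d i))).subset hsub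
  obtain ⟨N, hNle⟩ : ∃ N : ℕ, ∀ r : Fin n → ℕ, r ≤ d → ∀ i : Fin n, Nf r i ≤ N := by
    refine ⟨hfin.toFinset.sup (fun r => Finset.univ.sup (fun i => Nf r i)), ?_⟩
    intro r hr i
    calc Nf r i ≤ Finset.univ.sup (fun i => Nf r i) := Finset.le_sup (Finset.mem_univ i)
      _ ≤ _ := Finset.le_sup (f := fun r => Finset.univ.sup (fun i => Nf r i))
          (hfin.mem_toFinset.2 hr)
  have hNkey : ∀ r : Fin n → ℕ, r ≤ d → ∀ i : Fin n, ∀ a ∈ U r,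
      Function.update a i N ∈ U r := by
    intro r hr i a ha
    refine hUpper r _ (hNf r i a ha) _ ?_
    intro j
    rcases eq_or_ne j i with rfl | hj
    · simp only [Function.update_self]
      exact hNle r hr j
    · simp only [Function.update_of_ne hj]
      exact le_refl _
  refine ⟨n * (N + Q) + Q + 2, fun l hl α hα => ?_⟩
  have hl1 : 1 ≤ l := by omega
  obtain ⟨a, hbox, hsum⟩ := hgood l hl1 α hα
  set r : Fin n → ℕ := fun k => α k - a k * d k with hrdef
  have hbridge : ∀ k, (a k + 1) * d k = a k * d k + d k := fun k => by ring
  have hrd : r ≤ d := by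
    intro k
    have h1 := (hbox k).1
    have h2 := (hbox k).2
    have h3 := hbridge k
    simp only [hrdef]
    omega
  have hαr : ∀ k, α k = r k + a k * d k := by
    intro k
    have h1 := (hbox k).1
    simp only [hrdef]
    omega
  have hαr' : α = r + fun k => a k * d k := funext fun k => hαr k
  have hsuml : ∑ k, a k + 1 = l := by omega
  have haU : a ∈ U r := ⟨a, le_refl a, by rw [hsuml, ← hαr']; exact hα⟩
  have hn0 : n ≠ 0 := by
    intro h
    subst h
    simp only [Finset.univ_eq_empty, Finset.sum_empty] at hsum
    omega
  -- pigeonhole: some coordinate of `a` is at least `N + Q`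
  have hex : ∃ i, N + Q ≤ a i := by
    by_contra hcon
    push_neg at hcon
    haveI : Nonempty (Fin n) := ⟨⟨0, Nat.pos_of_ne_zero hn0⟩⟩
    have h1 : ∑ k, a k < ∑ _k : Fin n, (N + Q) :=
      Finset.sum_lt_sum_of_nonempty Finset.univ_nonempty (fun i _ => hcon i)
    have h2 : ∑ _k : Fin n, (N + Q) = n * (N + Q) := by
      simp [Finset.sum_const, Finset.card_univ, mul_comm]
    omega
  obtain ⟨i, hi⟩ := hex
  have hQai : Q ≤ a i := by omega
  set a' : Fin n → ℕ := Function.update a i (a i - Q) with ha'def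
  have ha'i : a' i = a i - Q := by rw [ha'def, Function.update_self]
  have ha'ne : ∀ k, k ≠ i → a' k = a k := fun k hk => by
    rw [ha'def, Function.update_of_ne hk]
  have ha'U : a' ∈ U r := by
    refine hUpper r _ (hNkey r hrd i a haU) a' ?_
    intro j
    rcases eq_or_ne j i with rfl | hj
    · rw [Function.update_self, ha'i]
      exact Nat.le_sub_of_add_le hi
    · rw [Function.update_of_ne hj, ha'ne j hj]
  obtain ⟨b, hba, hbmin⟩ := ha'U
  set c : Fin n → ℕ := fun k => a' k - b k with hcdef
  have hbc : ∀ k, b k + c k = a' k := by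
    intro k
    have h : b k ≤ a' k := hba k
    simp only [hcdef]
    omega
  -- the candidate generator
  set γ : Fin n → ℕ := r + fun k => a' k * d k with hγdef
  have hγk : ∀ k, γ k = r k + a' k * d k := fun k => rfl
  have hαγ : α = γ + Q • Pi.single i (d i) := by
    funext k
    simp only [Pi.add_apply, Pi.smul_apply, smul_eq_mul, hγk k]
    rcases eq_or_ne k i with rfl | hk
    · rw [Pi.single_eq_same, ha'i]
      have h1 : (a k - Q) * d k + Q * d k = a k * d k := by
        rw [← add_mul]
        congr 1
        omega
      have h2 := hαr k
      omega
    · rw [Pi.single_eq_of_ne hk, ha'ne k hk, mul_zero, add_zero]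
      exact hαr k
  -- sums
  have hsumc : ∑ k, b k + ∑ k, c k = ∑ k, a' k := by
    rw [← Finset.sum_add_distrib]
    exact Finset.sum_congr rfl (fun k _ => hbc k)
  have hsuma' : ∑ k, a' k + Q = ∑ k, a k := by
    have h1 : ∑ k, a' k = a i - Q + ∑ k ∈ Finset.univ.erase i, a k := by
      rw [ha'def, Finset.sum_update_of_mem (Finset.mem_univ i),
        Finset.sdiff_singleton_eq_erase]
    have h2 : a i + ∑ k ∈ Finset.univ.erase i, a k = ∑ k, a k :=
      Finset.add_sum_erase Finset.univ a (Finset.mem_univ i)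
    omega
  have hlQ : Q + 1 ≤ l := by omega
  have hpow : (∑ k, b k + 1) + ∑ k, c k = l - Q := by omega
  have hγmem : mono K γ ∈ I ^ (l - Q) := by
    have hsplit : γ = (r + fun k => b k * d k) + fun k => c k * d k := by
      funext k
      have h4 : b k * d k + c k * d k = a' k * d k := by rw [← add_mul, hbc k]
      simp only [Pi.add_apply, hγk k]
      omega
    rw [hsplit, ← hpow]
    exact mono_mul_mem hbmin.1 (mono_cd_mem hμ c)
  have hμQ : mono K (Q • Pi.single i (d i)) ∈ I ^ Q := by
    rw [← mono_pow]
    exact Ideal.pow_mem_pow (hμ i) Q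
  refine ⟨i, γ, ⟨hγmem, ?_⟩, hαγ⟩
  intro δ hδmem hδle
  have hmem : mono K (δ + Q • Pi.single i (d i)) ∈ I ^ l := by
    have h5 := mono_mul_mem hδmem hμQ
    rwa [Nat.sub_add_cancel (by omega : Q ≤ l)] at h5
  have hle : δ + Q • Pi.single i (d i) ≤ α := by
    rw [hαγ]
    exact add_le_add_left hδle _
  have h6 := hα.2 _ hmem hle
  rw [hαγ] at h6
  exact add_right_cancel h6

end GasanovaRR
end
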